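/- Let n ∈ ℕ with n ≥ 2, let p ∈ (0,2), let x ∈ ℝⁿ with |x| = 1 and let a ∈ [0,∞). Then ∫_{S^{n-1}} |x - a z|^{p-2} dσ(z) ≥ (1+a²)^{p/2 - 1} · (1 + ((4-p)(2-p)/(2n)) · a²/(1+a²)²). -/

import Mathlib

open MeasureTheory Metric

/-- The normalized rotation-invariant (Haar) probability measure `σ` on the unit
sphere `S^{n-1} ⊆ ℝⁿ`. -/
noncomputable def sphereHaar (n : ℕ) :
    Measure (sphere (0 : EuclideanSpace ℝ (Fin n)) 1) :=
  ((volume : Measure (EuclideanSpace ℝ (Fin n))).toSphere Set.univ)⁻¹ •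
    (volume : Measure (EuclideanSpace ℝ (Fin n))).toSphere

open Real Set
open scoped Pointwise ENNReal


open Real Set

lemma bracket_nonneg {r v : ℝ} (hr : r < 0) (hv : v ∈ Set.Ico (0:ℝ) 1) :
    2 ≤ (1 - v) ^ r + (1 + v) ^ r := by
  have h1 : (0:ℝ) < 1 - v := by linarith [hv.2]
  have h2 : (0:ℝ) < 1 + v := by linarith [hv.1]
  set A : ℝ := (1 + v) ^ (-r) with hA
  have hApos : 0 < A := Real.rpow_pos_of_pos h2 _
  have key : A ≤ (1 - v) ^ r := by
    have h3 : 1 - v ≤ (1 + v)⁻¹ := by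
      rw [← one_div, le_div_iff₀ h2]; nlinarith [hv.1, sq_nonneg v]
    calc A = ((1 + v)⁻¹) ^ r := by
          rw [hA, Real.inv_rpow h2.le, Real.rpow_neg h2.le]
      _ ≤ (1 - v) ^ r := Real.rpow_le_rpow_of_nonpos h1 h3 hr.le
  have hinv : (1 + v) ^ r = A⁻¹ := by
    rw [hA, ← Real.rpow_neg h2.le, neg_neg]
  have hAA : A * A⁻¹ = 1 := mul_inv_cancel₀ hApos.ne'
  nlinarith [sq_nonneg (A - 1), key, hAA, hApos]

lemma hasDerivAt_one_sub_rpow {q v : ℝ} (hv : v < 1) :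
    HasDerivAt (fun y : ℝ => (1 - y) ^ q) (-(q * (1 - v) ^ (q - 1))) v := by
  have h : HasDerivAt (fun y : ℝ => 1 - y) (-1) v := (hasDerivAt_id v).const_sub 1
  have := h.rpow_const (p := q) (Or.inl (by linarith : (0:ℝ) < 1 - v).ne')
  convert this using 1; ring

lemma hasDerivAt_one_add_rpow {q v : ℝ} (hv : -1 < v) :
    HasDerivAt (fun y : ℝ => (1 + y) ^ q) (q * (1 + v) ^ (q - 1)) v := by
  have h : HasDerivAt (fun y : ℝ => 1 + y) (1) v := (hasDerivAt_id v).const_add 1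
  have := h.rpow_const (p := q) (Or.inl (by linarith : (0:ℝ) < 1 + v).ne')
  convert this using 1; ring

lemma key_half {q u : ℝ} (hq : q < 0) (hu : u ∈ Set.Ico (0:ℝ) 1) :
    2 + q * (q - 1) * u ^ 2 ≤ (1 - u) ^ q + (1 + u) ^ q := by
  set g : ℝ → ℝ := fun v => (1 - v) ^ q + (1 + v) ^ q - q * (q - 1) * v ^ 2 with hgdef
  set g' : ℝ → ℝ := fun v =>
    -(q * (1 - v) ^ (q - 1)) + q * (1 + v) ^ (q - 1) - 2 * (q * (q - 1) * v) with hg'def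
  have hqq : 0 < q * (q - 1) := mul_pos_of_neg_of_neg hq (by linarith)
  have hDg : ∀ v ∈ Set.Ioo (-1:ℝ) 1, HasDerivAt g (g' v) v := by
    intro v hv
    have h1 := hasDerivAt_one_sub_rpow (q := q) (v := v) hv.2
    have h2 := hasDerivAt_one_add_rpow (q := q) (v := v) (by linarith [hv.1])
    have h3 : HasDerivAt (fun v : ℝ => q * (q - 1) * v ^ 2) (q * (q - 1) * (2 * v)) v := by
      simpa using ((hasDerivAt_pow 2 v).const_mul (q * (q - 1)))
    have := (h1.add h2).sub h3
    exact this.congr_deriv (by simp only [hg'def]; ring)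
  have hDg' : ∀ v ∈ Set.Ioo (-1:ℝ) 1,
      HasDerivAt g' (q * (q - 1) * ((1 - v) ^ (q - 2) + (1 + v) ^ (q - 2) - 2)) v := by
    intro v hv
    have h1 := (hasDerivAt_one_sub_rpow (q := q - 1) (v := v) hv.2).const_mul q
    have h2 := (hasDerivAt_one_add_rpow (q := q - 1) (v := v) (by linarith [hv.1])).const_mul q
    have h3 : HasDerivAt (fun v : ℝ => 2 * (q * (q - 1) * v)) (2 * (q * (q - 1))) v := by
      have := (hasDerivAt_id v).const_mul (2 * (q * (q - 1)))
      simpa [mul_assoc] using this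
    have := (h1.neg.add h2).sub h3
    have e1 : q - 1 - 1 = q - 2 := by ring
    exact this.congr_deriv (by rw [e1]; ring)
  -- g' is monotone on Ico 0 1
  have hmono' : MonotoneOn g' (Set.Ico (0:ℝ) 1) := by
    apply monotoneOn_of_deriv_nonneg (convex_Ico 0 1)
    · intro v hv
      exact (hDg' v ⟨by linarith [hv.1], hv.2⟩).continuousAt.continuousWithinAt
    · intro v hv
      rw [interior_Ico] at hv
      exact (hDg' v ⟨by linarith [hv.1], hv.2⟩).differentiableAt.differentiableWithinAt
    · intro v hv
      rw [interior_Ico] at hv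
      rw [(hDg' v ⟨by linarith [hv.1], hv.2⟩).deriv]
      have := bracket_nonneg (r := q - 2) (by linarith) ⟨hv.1.le, hv.2⟩
      nlinarith
  have hg'0 : g' 0 = 0 := by simp [hg'def]
  have hg'nonneg : ∀ v ∈ Set.Ico (0:ℝ) 1, 0 ≤ g' v := by
    intro v hv
    have := hmono' (Set.left_mem_Ico.2 one_pos) hv hv.1
    rwa [hg'0] at this
  have hmono : MonotoneOn g (Set.Ico (0:ℝ) 1) := by
    apply monotoneOn_of_deriv_nonneg (convex_Ico 0 1)
    · intro v hv
      exact (hDg v ⟨by linarith [hv.1], hv.2⟩).continuousAt.continuousWithinAt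
    · intro v hv
      rw [interior_Ico] at hv
      exact (hDg v ⟨by linarith [hv.1], hv.2⟩).differentiableAt.differentiableWithinAt
    · intro v hv
      rw [interior_Ico] at hv
      rw [(hDg v ⟨by linarith [hv.1], hv.2⟩).deriv]
      exact hg'nonneg v ⟨hv.1.le, hv.2⟩
  have h0 : g 0 = 2 := by simp [hgdef]; norm_num
  have := hmono (Set.left_mem_Ico.2 one_pos) hu hu.1
  rw [h0] at this
  simp only [hgdef] at this
  linarith

lemma key_pointwise {q u : ℝ} (hq : q < 0) (hu : |u| < 1) :
    2 + q * (q - 1) * u ^ 2 ≤ (1 - u) ^ q + (1 + u) ^ q := by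
  rcases le_or_gt 0 u with h | h
  · exact key_half hq ⟨h, lt_of_abs_lt hu⟩
  · have := key_half hq (u := -u) ⟨by linarith, by linarith [neg_lt_of_abs_lt hu, lt_of_abs_lt hu]⟩
    have e1 : 1 - -u = 1 + u := by ring
    have e2 : 1 + -u = 1 - u := by ring
    rw [e1, e2] at this
    nlinarith [this]


open MeasureTheory Metric Set
open scoped Pointwise

variable {n : ℕ}

local notation "E" n => EuclideanSpace ℝ (Fin n)


noncomputable def sphMap (A : (E n) ≃ₗᵢ[ℝ] (E n)) (z : sphere (0 : E n) 1) : sphere (0 : E n) 1 :=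
  ⟨A z, by
    rw [mem_sphere_zero_iff_norm, A.norm_map]
    exact mem_sphere_zero_iff_norm.1 z.2⟩

lemma continuous_sphMap (A : (E n) ≃ₗᵢ[ℝ] (E n)) : Continuous (sphMap A) :=
  Continuous.subtype_mk (A.continuous.comp continuous_subtype_val) _

lemma map_toSphere (A : (E n) ≃ₗᵢ[ℝ] (E n)) :
    Measure.map (sphMap A) (volume : Measure (E n)).toSphere
      = (volume : Measure (E n)).toSphere := by
  ext s hs
  rw [Measure.map_apply (continuous_sphMap A).measurable hs,
    Measure.toSphere_apply' _ hs, Measure.toSphere_apply' _ ((continuous_sphMap A).measurable hs)]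
  congr 1
  have himg : (Subtype.val '' (sphMap A ⁻¹' s)) = A ⁻¹' (Subtype.val '' s) := by
    ext w
    constructor
    · rintro ⟨z, hz, rfl⟩
      exact ⟨sphMap A z, hz, rfl⟩
    · rintro hw
      obtain ⟨y, hy, hAy⟩ := hw
      have hwnorm : ‖w‖ = 1 := by
        have : ‖A w‖ = 1 := by
          rw [← hAy]; exact mem_sphere_zero_iff_norm.1 y.2
        rwa [A.norm_map] at this
      refine ⟨⟨w, mem_sphere_zero_iff_norm.2 hwnorm⟩, ?_, rfl⟩
      have h5 : sphMap A ⟨w, mem_sphere_zero_iff_norm.2 hwnorm⟩ = y := Subtype.ext hAy.symm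
      rw [Set.mem_preimage, h5]; exact hy
  rw [himg]
  have hsmul : (Ioo (0:ℝ) 1 • (A ⁻¹' (Subtype.val '' s)))
      = A ⁻¹' (Ioo (0:ℝ) 1 • (Subtype.val '' s)) := by
    ext w
    constructor
    · rintro ⟨r, hr, b, hb, rfl⟩
      refine Set.mem_preimage.2 ⟨r, hr, A b, hb, ?_⟩
      simp [A.map_smul]
    · intro hw
      obtain ⟨r, hr, c, hc, hrc⟩ := Set.mem_preimage.1 hw
      refine ⟨r, hr, A.symm c, by simpa using hc, ?_⟩
      apply A.injective
      simp [A.map_smul, hrc]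
  rw [hsmul]
  have hmp := A.measurePreserving
  calc (volume : Measure (E n)) (A ⁻¹' (Ioo (0:ℝ) 1 • (Subtype.val '' s)))
      = (Measure.map A.toHomeomorph.toMeasurableEquiv (volume : Measure (E n)))
          (Ioo (0:ℝ) 1 • (Subtype.val '' s)) :=
        by
        have h9 := MeasurableEquiv.map_apply (μ := (volume : Measure (E n)))
          A.toHomeomorph.toMeasurableEquiv (Ioo (0:ℝ) 1 • (Subtype.val '' s))
        exact h9.symm
    _ = (volume : Measure (E n)) (Ioo (0:ℝ) 1 • (Subtype.val '' s)) := by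
        rw [show Measure.map (⇑A.toHomeomorph.toMeasurableEquiv) (volume : Measure (E n))
            = Measure.map (⇑A) (volume : Measure (E n)) from rfl, hmp.map_eq]

lemma map_sphereHaar (A : (E n) ≃ₗᵢ[ℝ] (E n)) :
    Measure.map (sphMap A) (sphereHaar n) = sphereHaar n := by
  rw [sphereHaar, Measure.map_smul, map_toSphere]


local notation "S" n => sphere (0 : EuclideanSpace ℝ (Fin n)) 1

lemma toSphere_univ_pos (hn : 1 ≤ n) :
    0 < (volume : Measure (E n)).toSphere Set.univ ∧
      (volume : Measure (E n)).toSphere Set.univ < ⊤ := by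
  rw [Measure.toSphere_apply_univ]
  have hdim : Module.finrank ℝ (E n) = n := finrank_euclideanSpace_fin
  constructor
  · apply ENNReal.mul_pos
    · simp [hdim]; omega
    · exact (measure_ball_pos volume 0 one_pos).ne'
  · exact ENNReal.mul_lt_top (by simp) measure_ball_lt_top

theorem sphereHaar_prob (hn : 1 ≤ n) : IsProbabilityMeasure (sphereHaar n) := by
  constructor
  rw [sphereHaar, Measure.smul_apply, smul_eq_mul]
  exact ENNReal.inv_mul_cancel (toSphere_univ_pos hn).1.ne' (toSphere_univ_pos hn).2.ne

lemma integrable_inner_sq (hn : 1 ≤ n) (y : E n) :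
    Integrable (fun z : S n => (inner ℝ y (z : E n) : ℝ) ^ 2) (sphereHaar n) := by
  have hcont : Continuous (fun z : S n => (inner ℝ y (z : E n) : ℝ) ^ 2) :=
    (continuous_const.inner continuous_subtype_val).pow 2
  have : IsProbabilityMeasure (sphereHaar n) := sphereHaar_prob hn
  exact hcont.integrable_of_hasCompactSupport ((isClosed_tsupport _).isCompact)

lemma integral_inner_sq_congr {x y : E n} (hx : ‖x‖ = 1) (hy : ‖y‖ = 1) :
    ∫ z : S n, (inner ℝ x (z : E n) : ℝ) ^ 2 ∂(sphereHaar n)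
      = ∫ z : S n, (inner ℝ y (z : E n) : ℝ) ^ 2 ∂(sphereHaar n) := by
  set A : (E n) ≃ₗᵢ[ℝ] (E n) := (ℝ ∙ (x - y))ᗮ.reflection with hA
  have hAx : A x = y := Submodule.reflection_sub (by rw [hx, hy])
  have hAy : A y = x := by
    have := Submodule.reflection_involutive (ℝ ∙ (x - y))ᗮ x
    rw [hA]
    rw [show (ℝ ∙ (x - y))ᗮ.reflection x = y from hAx] at this
    exact this
  have key : ∀ z : S n, (inner ℝ x ((sphMap A z : S n) : E n) : ℝ) ^ 2
      = (inner ℝ y (z : E n) : ℝ) ^ 2 := by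
    intro z
    have h7 : (inner ℝ x (A (z : E n)) : ℝ) = inner ℝ y (z : E n) := by
      calc (inner ℝ x (A (z : E n)) : ℝ) = inner ℝ (A y) (A (z : E n)) := by rw [hAy]
        _ = inner ℝ y (z : E n) := A.inner_map_map _ _
    show (inner ℝ x (A (z : E n)) : ℝ) ^ 2 = (inner ℝ y (z : E n) : ℝ) ^ 2
    rw [h7]
  conv_lhs => rw [← map_sphereHaar A]
  rw [integral_map (continuous_sphMap A).measurable.aemeasurable
    (((continuous_const.inner continuous_subtype_val).pow 2).aestronglyMeasurable)]
  simp_rw [key]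

lemma moment (hn : 1 ≤ n) {x : E n} (hx : ‖x‖ = 1) :
    ∫ z : S n, (inner ℝ x (z : E n) : ℝ) ^ 2 ∂(sphereHaar n) = 1 / n := by
  have : IsProbabilityMeasure (sphereHaar n) := sphereHaar_prob hn
  have hsum : ∀ z : S n, ∑ i : Fin n, (inner ℝ (EuclideanSpace.single i (1:ℝ)) (z : E n) : ℝ) ^ 2
      = 1 := by
    intro z
    have hz : ‖(z : E n)‖ = 1 := mem_sphere_zero_iff_norm.1 z.2
    have : ∑ i : Fin n, ((z : E n) i) ^ 2 = 1 := by
      have h2 := real_inner_self_eq_norm_sq (z : E n)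
      have h3 : (inner ℝ (z : E n) (z : E n) : ℝ) = ∑ i : Fin n, ((z : E n) i) ^ 2 := by
        simp only [PiLp.inner_apply, RCLike.inner_apply, conj_trivial, sq]
      rw [h3] at h2
      rw [h2, hz]; norm_num
    simp_rw [EuclideanSpace.inner_single_left]
    simpa using this
  have heach : ∀ i : Fin n,
      ∫ z : S n, (inner ℝ (EuclideanSpace.single i (1:ℝ)) (z : E n) : ℝ) ^ 2 ∂(sphereHaar n)
        = ∫ z : S n, (inner ℝ x (z : E n) : ℝ) ^ 2 ∂(sphereHaar n) :=
    fun i => integral_inner_sq_congr (by simp) hx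
  have hsum2 : (n : ℝ) * ∫ z : S n, (inner ℝ x (z : E n) : ℝ) ^ 2 ∂(sphereHaar n) = 1 := by
    calc (n : ℝ) * ∫ z : S n, (inner ℝ x (z : E n) : ℝ) ^ 2 ∂(sphereHaar n)
        = ∑ i : Fin n,
            ∫ z : S n, (inner ℝ (EuclideanSpace.single i (1:ℝ)) (z : E n) : ℝ) ^ 2 ∂(sphereHaar n) := by
          rw [Finset.sum_congr rfl (fun i _ => heach i), Finset.sum_const, Finset.card_univ,
            Fintype.card_fin, nsmul_eq_mul]
      _ = ∫ z : S n, ∑ i : Fin n,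
            (inner ℝ (EuclideanSpace.single i (1:ℝ)) (z : E n) : ℝ) ^ 2 ∂(sphereHaar n) :=
          (integral_finset_sum _ (fun i _ => integrable_inner_sq hn _)).symm
      _ = 1 := by simp_rw [hsum]; simp
  have hn0 : (n : ℝ) ≠ 0 := Nat.cast_ne_zero.2 (by omega)
  field_simp at hsum2 ⊢
  linarith [hsum2]


lemma sphereHaar_singleton (hn : 2 ≤ n) (z0 : S n) : sphereHaar n {z0} = 0 := by
  rw [sphereHaar, Measure.smul_apply]
  have h0 : (volume : Measure (E n)).toSphere {z0} = 0 := by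
    rw [Measure.toSphere_apply' _ (measurableSet_singleton z0)]
    have hsub : (Ioo (0:ℝ) 1 • (Subtype.val '' ({z0} : Set (S n))))
        ⊆ (Submodule.span ℝ {(z0 : E n)} : Submodule ℝ (E n)) := by
      rintro w ⟨r, hr, b, hb, rfl⟩
      simp only [Set.image_singleton, Set.mem_singleton_iff] at hb
      subst hb
      exact Submodule.smul_mem _ r (Submodule.mem_span_singleton_self _)
    have hne : (Submodule.span ℝ {(z0 : E n)}) ≠ ⊤ := by
      intro htop
      have hz0 : (z0 : E n) ≠ 0 := by
        have := mem_sphere_zero_iff_norm.1 z0.2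
        intro h; rw [h] at this; simp at this
      have h1 : Module.finrank ℝ (Submodule.span ℝ {(z0 : E n)}) = 1 :=
        finrank_span_singleton hz0
      rw [htop, finrank_top] at h1
      rw [finrank_euclideanSpace_fin] at h1
      omega
    have := Measure.addHaar_submodule (volume : Measure (E n)) _ hne
    rw [show ((Submodule.span ℝ {(z0 : E n)} : Submodule ℝ (E n)) : Set (E n))
      = (Submodule.span ℝ {(z0 : E n)} : Set (E n)) from rfl] at this
    rw [measure_mono_null hsub this]
    simp
  rw [h0]
  simp

theorem stmt_8 (n : ℕ) (hn : 2 ≤ n) (p : ℝ) (hp : p ∈ Set.Ioo (0 : ℝ) 2)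
    (x : EuclideanSpace ℝ (Fin n)) (hx : ‖x‖ = 1) (a : ℝ) (ha : 0 ≤ a) :
    ENNReal.ofReal ((1 + a ^ 2) ^ (p / 2 - 1) *
        (1 + (4 - p) * (2 - p) / (2 * n) * (a ^ 2 / (1 + a ^ 2) ^ 2))) ≤
      ∫⁻ z : sphere (0 : EuclideanSpace ℝ (Fin n)) 1,
        ENNReal.ofReal (‖x - a • (z : EuclideanSpace ℝ (Fin n))‖ ^ (p - 2)) ∂(sphereHaar n) := by
  obtain ⟨hp0, hp2⟩ := hp
  have hn1 : 1 ≤ n := by omega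
  have hprob : IsProbabilityMeasure (sphereHaar n) := sphereHaar_prob hn1
  have h1a : (0:ℝ) < 1 + a ^ 2 := by positivity
  set q : ℝ := p / 2 - 1 with hqdef
  have hq : q < 0 := by rw [hqdef]; linarith
  set s : ℝ := 2 * a / (1 + a ^ 2) with hsdef
  have hs0 : 0 ≤ s := by positivity
  have hs1 : s ≤ 1 := by
    rw [hsdef, div_le_one h1a]; nlinarith [sq_nonneg (a - 1)]
  set K : ℝ := (1 + a ^ 2) ^ q with hKdef
  have hK0 : 0 < K := Real.rpow_pos_of_pos h1a _
  set D : ℝ := q * (q - 1) * s ^ 2 with hDdef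
  have hD0 : 0 ≤ D := by
    have hqq : 0 < q * (q - 1) := mul_pos_of_neg_of_neg hq (by linarith)
    positivity
  set N : (S n) → (S n) := sphMap (LinearIsometryEquiv.neg ℝ) with hNdef
  set G : (S n) → ℝ≥0∞ :=
    fun z => ENNReal.ofReal (‖x - a • (z : E n)‖ ^ (p - 2)) with hGdef
  have hGmeas : Measurable G :=
    by
    have hc : Continuous (fun z : S n => ‖x - a • (z : E n)‖) := by fun_prop
    exact (hc.measurable.pow_const (p - 2)).ennreal_ofReal
  have hNmeas : Measurable N := (continuous_sphMap _).measurable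
  have htabs : ∀ z : S n, |(inner ℝ x (z : E n) : ℝ)| ≤ 1 := by
    intro z
    have h := abs_real_inner_le_norm x (z : E n)
    rwa [hx, mem_sphere_zero_iff_norm.1 z.2, one_mul] at h
  have hae : ∀ᵐ (z : S n) ∂(sphereHaar n), |(inner ℝ x (z : E n) : ℝ)| < 1 := by
    have hxs : x ∈ sphere (0 : E n) 1 := mem_sphere_zero_iff_norm.2 hx
    have hxs' : -x ∈ sphere (0 : E n) 1 := by
      rw [mem_sphere_zero_iff_norm, norm_neg, hx]
    have hsub : {z : S n | ¬ |(inner ℝ x (z : E n) : ℝ)| < 1}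
        ⊆ {(⟨x, hxs⟩ : S n)} ∪ {(⟨-x, hxs'⟩ : S n)} := by
      intro z hz
      simp only [Set.mem_setOf_eq, not_lt] at hz
      have heq : |(inner ℝ x (z : E n) : ℝ)| = 1 := le_antisymm (htabs z) hz
      rcases (abs_eq (by norm_num : (0:ℝ) ≤ 1)).1 heq with h | h
      · left
        have hxe : x = (z : E n) :=
          (inner_eq_one_iff_of_norm_eq_one hx (mem_sphere_zero_iff_norm.1 z.2)).1 h
        exact Set.mem_singleton_iff.2 (Subtype.ext hxe.symm)
      · right
        have hinner : (inner ℝ x (-(z : E n)) : ℝ) = 1 := by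
          rw [inner_neg_right, h]; ring
        have hnn : ‖-(z : E n)‖ = 1 := by
          rw [norm_neg]; exact mem_sphere_zero_iff_norm.1 z.2
        have hxe : x = -(z : E n) := (inner_eq_one_iff_of_norm_eq_one hx hnn).1 hinner
        have hze : (z : E n) = -x := by rw [hxe]; simp
        exact Set.mem_singleton_iff.2 (Subtype.ext hze)
    rw [ae_iff]
    exact measure_mono_null hsub
      (measure_union_null (sphereHaar_singleton hn _) (sphereHaar_singleton hn _))
  have hpoint : ∀ᵐ (z : S n) ∂(sphereHaar n),
      ENNReal.ofReal (K * (2 + D * (inner ℝ x (z : E n) : ℝ) ^ 2)) ≤ G z + G (N z) := by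
    filter_upwards [hae] with z hz
    set t : ℝ := (inner ℝ x (z : E n) : ℝ) with htdef
    have hst : |s * t| < 1 := by
      rw [abs_mul]
      calc |s| * |t| ≤ 1 * |t| := by
            apply mul_le_mul_of_nonneg_right _ (abs_nonneg t)
            rwa [abs_of_nonneg hs0]
        _ < 1 := by rwa [one_mul]
    have h1m : 0 < 1 - s * t := by
      have h5 := lt_of_abs_lt hst; linarith
    have h1p : 0 < 1 + s * t := by
      have h5 := neg_lt_of_abs_lt hst; linarith
    have hnorm1 : ‖x - a • (z : E n)‖ ^ (2:ℕ) = (1 + a ^ 2) * (1 - s * t) := by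
      rw [norm_sub_sq_real, real_inner_smul_right, norm_smul,
        mem_sphere_zero_iff_norm.1 z.2, hx, Real.norm_eq_abs, abs_of_nonneg ha, ← htdef,
        hsdef]
      field_simp
      ring
    have hNz : ((N z : S n) : E n) = -(z : E n) := rfl
    have hnorm2 : ‖x - a • ((N z : S n) : E n)‖ ^ (2:ℕ) = (1 + a ^ 2) * (1 + s * t) := by
      rw [hNz, smul_neg, sub_neg_eq_add, norm_add_sq_real, real_inner_smul_right, norm_smul,
        mem_sphere_zero_iff_norm.1 z.2, hx, Real.norm_eq_abs, abs_of_nonneg ha, ← htdef,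
        hsdef]
      field_simp
      ring
    have hexp : ∀ b : ℝ, 0 ≤ b → b ^ (p - 2) = (b ^ (2:ℕ)) ^ q := by
      intro b hb
      rw [← Real.rpow_natCast b 2, ← Real.rpow_mul hb]
      congr 1
      rw [hqdef]; push_cast; ring
    have hGz : G z = ENNReal.ofReal (K * (1 - s * t) ^ q) := by
      simp only [hGdef]
      congr 1
      rw [hexp _ (norm_nonneg _), hnorm1, Real.mul_rpow h1a.le h1m.le, hKdef]
    have hGNz : G (N z) = ENNReal.ofReal (K * (1 + s * t) ^ q) := by
      simp only [hGdef]
      congr 1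
      rw [hexp _ (norm_nonneg _), hnorm2, Real.mul_rpow h1a.le h1p.le, hKdef]
    rw [hGz, hGNz, ← ENNReal.ofReal_add (by positivity) (by positivity)]
    apply ENNReal.ofReal_le_ofReal
    have hkey := key_pointwise hq hst
    calc K * (2 + D * t ^ 2) ≤ K * ((1 - s*t) ^ q + (1 + s*t) ^ q) := by
          apply mul_le_mul_of_nonneg_left _ hK0.le
          have hDe : D * t ^ 2 = q * (q-1) * (s*t)^2 := by rw [hDdef]; ring
          rw [hDe]; exact hkey
      _ = K * (1 - s*t) ^ q + K * (1 + s*t) ^ q := by ring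
  have hint2 : Integrable (fun z : S n => D * (inner ℝ x (z : E n) : ℝ) ^ 2) (sphereHaar n) :=
    (integrable_inner_sq hn1 x).const_mul D
  have hint : Integrable (fun z : S n =>
      K * (2 + D * (inner ℝ x (z : E n) : ℝ) ^ 2)) (sphereHaar n) :=
    ((integrable_const (2:ℝ)).add hint2).const_mul K
  have hlow : ∫⁻ (z : S n), ENNReal.ofReal (K * (2 + D * (inner ℝ x (z : E n) : ℝ) ^ 2)) ∂(sphereHaar n)
      = ENNReal.ofReal (K * (2 + D * (1 / n))) := by
    rw [← ofReal_integral_eq_lintegral_ofReal hint ?nn]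
    · congr 1
      rw [integral_const_mul, integral_add (integrable_const _) hint2,
        integral_const, integral_const_mul, moment hn1 hx]
      simp [measure_univ]
    case nn =>
      filter_upwards with z
      have h6 : (0:ℝ) ≤ D * (inner ℝ x (z : E n) : ℝ) ^ 2 := by positivity
      positivity
  have hmap : ∫⁻ z, G (N z) ∂(sphereHaar n) = ∫⁻ z, G z ∂(sphereHaar n) := by
    conv_rhs => rw [← map_sphereHaar (LinearIsometryEquiv.neg ℝ)]
    rw [lintegral_map hGmeas hNmeas]
  have hdouble : (2:ℝ≥0∞) * ∫⁻ z, G z ∂(sphereHaar n)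
      = ∫⁻ z, (G z + G (N z)) ∂(sphereHaar n) := by
    rw [lintegral_add_left hGmeas, hmap, two_mul]
  have hmono : ENNReal.ofReal (K * (2 + D * (1/n))) ≤ ∫⁻ z, (G z + G (N z)) ∂(sphereHaar n) := by
    rw [← hlow]
    exact lintegral_mono_ae hpoint
  have h2 : (2:ℝ≥0∞) * ENNReal.ofReal
        (K * (1 + (4 - p) * (2 - p) / (2 * n) * (a ^ 2 / (1 + a ^ 2) ^ 2)))
      ≤ (2:ℝ≥0∞) * ∫⁻ z, G z ∂(sphereHaar n) := by
    rw [hdouble]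
    refine le_trans (le_of_eq ?_) hmono
    rw [← ENNReal.ofReal_ofNat 2, ← ENNReal.ofReal_mul (by norm_num)]
    congr 1
    have hne : (n:ℝ) ≠ 0 := Nat.cast_ne_zero.2 (by omega)
    rw [hDdef, hsdef, hqdef]
    field_simp
    ring
  exact (ENNReal.mul_le_mul_iff_right (by norm_num) (by norm_num)).1 h2
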